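/- Let q = 2^m with m odd and m > 3. For any two distinct fixed elements x_1, x_2 ∈ F_q^*, the number of unordered triples {x_3, x_4, x_5} such that x_1, ..., x_5 are pairwise distinct nonzero elements of F_q and ∑_{1 ≤ i < j ≤ 4} x_i x_j + (x_1+x_2+x_3+x_4)x_5 = 0 equals (q-5)(q-8)/6. -/

import Mathlib

lemma char2of (F : Type*) [Field F] [Fintype F] (m : ℕ) (hm : 0 < m)
    (hF : Fintype.card F = 2 ^ m) : (2 : F) = 0 := by
  have h := FiniteField.cast_card_eq_zero F
  rw [hF] at h
  push_cast at h
  exact pow_eq_zero_iff hm.ne' |>.mp h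

lemma no_cube_root (F : Type*) [Field F] [Fintype F] [DecidableEq F] (m : ℕ) (hmo : Odd m)
    (hF : Fintype.card F = 2 ^ m) (hF2 : (2:F) = 0) :
    ∀ w : F, w ^ 2 + w + 1 ≠ 0 := by
  intro w hw
  have hw0 : w ≠ 0 := by rintro rfl; simp at hw
  have hw1 : w ≠ 1 := by
    rintro rfl
    have : (1:F) = 0 := by linear_combination hw - hF2
    simp at this
  have hw3 : w ^ 3 = 1 := by linear_combination (w - 1) * hw
  set u : Fˣ := Units.mk0 w hw0 with hu
  have hu3 : u ^ 3 = 1 := by ext; push_cast [hu]; exact hw3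
  have hd : orderOf u ∣ 3 := orderOf_dvd_of_pow_eq_one hu3
  have hne : orderOf u ≠ 1 := by
    intro h
    rw [orderOf_eq_one_iff] at h
    apply hw1
    have := congrArg Units.val h
    simpa [hu] using this
  have h3 : orderOf u = 3 := by
    rcases (Nat.prime_three).eq_one_or_self_of_dvd _ hd with h | h
    · exact absurd h hne
    · exact h
  have hcd : orderOf u ∣ Fintype.card Fˣ := orderOf_dvd_card
  rw [h3, Fintype.card_units, hF] at hcd
  obtain ⟨k, hk⟩ := hmo
  have hpow : 2 ^ m = 2 * 4 ^ k := by
    subst hk; rw [pow_succ, pow_mul]; ring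
  have h4 : ∀ j : ℕ, 3 ∣ 4 ^ j - 1 := by
    intro j
    induction j with
    | zero => simp
    | succ n ih =>
      have h1 : 4 ^ (n+1) = 4 * 4 ^ n := by rw [pow_succ]; ring
      have h2 : 1 ≤ 4 ^ n := Nat.one_le_pow _ _ (by norm_num)
      omega
  have h5 : 1 ≤ 4 ^ k := Nat.one_le_pow _ _ (by norm_num)
  have h6 := h4 k
  rw [hpow] at hcd
  omega

lemma quad_no_root (F : Type*) [Field F] (hF2 : (2:F) = 0)
    (L1 : ∀ w : F, w ^ 2 + w + 1 ≠ 0) (a b : F) (hb : b ≠ 0) (hab : a ≠ b) :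
    ∀ t : F, t ^ 2 + (a + b) * t + (a ^ 2 + a * b + b ^ 2) ≠ 0 := by
  intro t h
  have hs : a + b ≠ 0 := by
    intro hs
    apply hab
    linear_combination hs - b * hF2
  have key : (t+a)^2 + (t+a)*(a+b) + (a+b)^2 = 0 := by
    linear_combination h + (t*a + a^2 + a*b) * hF2
  apply L1 ((t + a)/(a + b))
  have expand : ((t+a)/(a+b))^2 + ((t+a)/(a+b)) + 1
      = ((t+a)^2 + (t+a)*(a+b) + (a+b)^2)/(a+b)^2 := by
    field_simp
  rw [expand, key, zero_div]

lemma sq_inj (F : Type*) [Field F] (hF2 : (2:F) = 0) :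
    ∀ x y : F, x ^ 2 = y ^ 2 → x = y := by
  intro x y h
  have h1 : (x + y) ^ 2 = 0 := by linear_combination h + (x*y + y^2) * hF2
  have h2 : x + y = 0 := by
    exact pow_eq_zero_iff (n := 2) (by norm_num) |>.mp h1
  linear_combination h2 - y * hF2

lemma exists_sqrt (F : Type*) [Field F] [Fintype F] (hF2 : (2:F) = 0) (y : F) :
    ∃ x : F, x ^ 2 = y := by
  have hinj : Function.Injective (fun x : F => x ^ 2) := fun a b => sq_inj F hF2 a b
  have hsurj := Finite.surjective_of_injective hinj
  obtain ⟨x, hx⟩ := hsurj y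
  exact ⟨x, hx⟩



set_option maxHeartbeats 1600000 in
lemma perm3 {α : Type*} (a b cc u v w : α) (d12 : a ≠ b) (d13 : a ≠ cc) (d23 : b ≠ cc)
    (ha : a = u ∨ a = v ∨ a = w) (hb : b = u ∨ b = v ∨ b = w)
    (hcc : cc = u ∨ cc = v ∨ cc = w) :
    (a = u ∧ b = v ∧ cc = w) ∨ (a = u ∧ b = w ∧ cc = v) ∨ (a = v ∧ b = u ∧ cc = w) ∨
    (a = v ∧ b = w ∧ cc = u) ∨ (a = w ∧ b = u ∧ cc = v) ∨ (a = w ∧ b = v ∧ cc = u) := by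
  rcases ha with rfl | rfl | rfl <;> rcases hb with rfl | rfl | rfl <;>
    rcases hcc with rfl | rfl | rfl <;> tauto

lemma card6 {α : Type*} [DecidableEq α] (u v w : α) (huv : u ≠ v) (huw : u ≠ w)
    (hvw : v ≠ w) :
    ({((u,v,w) : α × α × α), (u,w,v), (v,u,w), (v,w,u), (w,u,v), (w,v,u)} :
      Finset (α × α × α)).card = 6 := by
  rw [Finset.card_insert_of_notMem (by
      simp [Prod.ext_iff, huv, huw, hvw, Ne.symm huv, Ne.symm huw, Ne.symm hvw]),
    Finset.card_insert_of_notMem (by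
      simp [Prod.ext_iff, huv, huw, hvw, Ne.symm huv, Ne.symm huw, Ne.symm hvw]),
    Finset.card_insert_of_notMem (by
      simp [Prod.ext_iff, huv, huw, hvw, Ne.symm huv, Ne.symm huw, Ne.symm hvw]),
    Finset.card_insert_of_notMem (by
      simp [Prod.ext_iff, huv, huw, hvw, Ne.symm huv, Ne.symm huw, Ne.symm hvw]),
    Finset.card_insert_of_notMem (by
      simp [Prod.ext_iff, huv, huw, hvw, Ne.symm huv, Ne.symm huw, Ne.symm hvw]),
    Finset.card_singleton]

lemma tripleperm {α : Type*} [DecidableEq α] (u v w : α) :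
    ({u,v,w} : Finset α) = {u,w,v} ∧ ({u,v,w} : Finset α) = {v,u,w} ∧
    ({u,v,w} : Finset α) = {v,w,u} ∧ ({u,v,w} : Finset α) = {w,u,v} ∧
    ({u,v,w} : Finset α) = {w,v,u} := by
  refine ⟨?_, ?_, ?_, ?_, ?_⟩ <;> (ext z; simp; tauto)

set_option maxHeartbeats 3200000 in
theorem stmt16 (m : ℕ) (hm : 3 < m) (hmo : Odd m)
    (F : Type*) [Field F] [Fintype F] [DecidableEq F]
    (hF : Fintype.card F = 2 ^ m)
    (x₁ x₂ : F) (h1 : x₁ ≠ 0) (h2 : x₂ ≠ 0) (h12 : x₁ ≠ x₂) :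
    {s : Finset F | ∃ x₃ x₄ x₅ : F, s = {x₃, x₄, x₅} ∧
      x₃ ≠ x₄ ∧ x₃ ≠ x₅ ∧ x₄ ≠ x₅ ∧
      x₃ ≠ 0 ∧ x₄ ≠ 0 ∧ x₅ ≠ 0 ∧
      x₃ ≠ x₁ ∧ x₃ ≠ x₂ ∧ x₄ ≠ x₁ ∧ x₄ ≠ x₂ ∧ x₅ ≠ x₁ ∧ x₅ ≠ x₂ ∧
      x₁ * x₂ + x₁ * x₃ + x₁ * x₄ + x₂ * x₃ + x₂ * x₄ + x₃ * x₄ +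
        (x₁ + x₂ + x₃ + x₄) * x₅ = 0}.ncard
      = (2 ^ m - 5) * (2 ^ m - 8) / 6 := by
  classical
  have hF2 : (2:F) = 0 := char2of F m (by omega) hF
  have L1 : ∀ w : F, w ^ 2 + w + 1 ≠ 0 := no_cube_root F m hmo hF hF2
  have L2 : ∀ t : F, t ^ 2 + (x₁ + x₂) * t + (x₁ ^ 2 + x₁ * x₂ + x₂ ^ 2) ≠ 0 :=
    quad_no_root F hF2 L1 x₁ x₂ h2 h12
  have hq16 : 16 ≤ 2 ^ m := by
    calc (16:ℕ) = 2 ^ 4 := by norm_num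
    _ ≤ 2 ^ m := Nat.pow_le_pow_right (by norm_num) (by omega)
  set q : ℕ := 2 ^ m with hqdef
  -- basic elements
  set s : F := x₁ + x₂ with hsdef
  set c : F := x₁ ^ 2 + x₁ * x₂ + x₂ ^ 2 with hcdef
  have hs : s ≠ 0 := by
    intro h; apply h12; linear_combination h - x₂ * hF2
  have hc : c ≠ 0 := by
    intro h
    apply L1 (x₁ / x₂)
    have expand : (x₁/x₂)^2 + (x₁/x₂) + 1 = c / x₂^2 := by
      rw [hcdef]; field_simp
    rw [expand, h, zero_div]
  obtain ⟨e, he⟩ := exists_sqrt F hF2 c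
  obtain ⟨e', he'⟩ := exists_sqrt F hF2 (x₁ * x₂)
  -- finsets
  set T : Finset (F × F × F) := Finset.univ.filter (fun t =>
    t.1 ≠ t.2.1 ∧ t.1 ≠ t.2.2 ∧ t.2.1 ≠ t.2.2 ∧
    t.1 ≠ 0 ∧ t.2.1 ≠ 0 ∧ t.2.2 ≠ 0 ∧
    t.1 ≠ x₁ ∧ t.1 ≠ x₂ ∧ t.2.1 ≠ x₁ ∧ t.2.1 ≠ x₂ ∧ t.2.2 ≠ x₁ ∧ t.2.2 ≠ x₂ ∧
    x₁ * x₂ + x₁ * t.1 + x₁ * t.2.1 + x₂ * t.1 + x₂ * t.2.1 + t.1 * t.2.1 +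
      (x₁ + x₂ + t.1 + t.2.1) * t.2.2 = 0) with hTdef
  set Dom : Finset (F × F) := Finset.univ.filter (fun p =>
    p.1 ≠ 0 ∧ p.1 ≠ x₁ ∧ p.1 ≠ x₂ ∧ p.2 ≠ 0 ∧ p.2 ≠ x₁ ∧ p.2 ≠ x₂ ∧
    p.1 ≠ p.2 ∧ p.1 + p.2 ≠ s) with hDomdef
  set g : F × F → F := fun p =>
    (x₁ * x₂ + s * (p.1 + p.2) + p.1 * p.2) / (s + p.1 + p.2) with hgdef
  set A : Finset (F × F) := Dom.filter (fun p =>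
    g p ≠ 0 ∧ g p ≠ x₁ ∧ g p ≠ x₂ ∧ g p ≠ p.1 ∧ g p ≠ p.2) with hAdef
  set B0 : Finset (F × F) := Dom.filter (fun p => g p = 0) with hB0def
  set Ba : Finset (F × F) := Dom.filter (fun p => g p = x₁) with hBadef
  set Bb : Finset (F × F) := Dom.filter (fun p => g p = x₂) with hBbdef
  set Bu : Finset (F × F) := Dom.filter (fun p => g p = p.1) with hBudef
  set Bv : Finset (F × F) := Dom.filter (fun p => g p = p.2) with hBvdef
  have hmemDom : ∀ p : F × F, p ∈ Dom → (p.1 ≠ 0 ∧ p.1 ≠ x₁ ∧ p.1 ≠ x₂ ∧ p.2 ≠ 0 ∧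
      p.2 ≠ x₁ ∧ p.2 ≠ x₂ ∧ p.1 ≠ p.2 ∧ p.1 + p.2 ≠ s) := by
    intro p hp; rw [hDomdef, Finset.mem_filter] at hp; exact hp.2
  have htw : ∀ x : F, x + x = 0 := by intro x; linear_combination x * hF2
  have hmemT : ∀ t : F × F × F, t ∈ T → (t.1 ≠ t.2.1 ∧ t.1 ≠ t.2.2 ∧ t.2.1 ≠ t.2.2 ∧
      t.1 ≠ 0 ∧ t.2.1 ≠ 0 ∧ t.2.2 ≠ 0 ∧
      t.1 ≠ x₁ ∧ t.1 ≠ x₂ ∧ t.2.1 ≠ x₁ ∧ t.2.1 ≠ x₂ ∧ t.2.2 ≠ x₁ ∧ t.2.2 ≠ x₂ ∧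
      x₁ * x₂ + x₁ * t.1 + x₁ * t.2.1 + x₂ * t.1 + x₂ * t.2.1 + t.1 * t.2.1 +
        (x₁ + x₂ + t.1 + t.2.1) * t.2.2 = 0) := by
    intro t ht; rw [hTdef, Finset.mem_filter] at ht; exact ht.2
  have hsden : ∀ t : F × F × F, t ∈ T → s + t.1 + t.2.1 ≠ 0 := by
    intro t ht hden0
    obtain ⟨-, -, -, -, -, -, -, -, -, -, -, -, heq⟩ := hmemT t ht
    apply L2 t.1
    linear_combination -heq + (t.2.2 + x₁ + x₂ + t.1) * hden0 - (t.2.2 + x₁ + x₂) * hsdef + hcdef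
  have hgw : ∀ t : F × F × F, t ∈ T → g (t.1, t.2.1) = t.2.2 := by
    intro t ht
    obtain ⟨-, -, -, -, -, -, -, -, -, -, -, -, heq⟩ := hmemT t ht
    rw [hgdef]
    show (x₁ * x₂ + s * (t.1 + t.2.1) + t.1 * t.2.1) / (s + t.1 + t.2.1) = t.2.2
    rw [div_eq_iff (hsden t ht)]
    linear_combination heq + (t.1 + t.2.1 - t.2.2) * hsdef
      - (t.2.2 * (x₁ + x₂ + t.1 + t.2.1)) * hF2
  have hTA : T.card = A.card := by
    apply Finset.card_nbij' (i := fun t => (t.1, t.2.1)) (j := fun p => (p.1, p.2, g p))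
    · intro t ht
      obtain ⟨huv, huw, hvw, hu0, hv0, hw0, hua, hub, hva, hvb, hwa, hwb, heq⟩ := hmemT t ht
      rw [hAdef, Finset.mem_coe, Finset.mem_filter]
      constructor
      · rw [hDomdef, Finset.mem_filter]
        refine ⟨Finset.mem_univ _, hu0, hua, hub, hv0, hva, hvb, huv, ?_⟩
        intro hsum
        exact hsden t ht (by linear_combination hsum + htw s - s * hF2 + (x₁ + x₂) * hF2)
      · rw [hgw t ht]
        exact ⟨hw0, hwa, hwb, fun h => huw h.symm, fun h => hvw h.symm⟩
    · intro p hp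
      rw [hAdef, Finset.mem_coe, Finset.mem_filter] at hp
      obtain ⟨hpD, hg0, hga, hgb, hgu, hgv⟩ := hp
      obtain ⟨hu0, hua, hub, hv0, hva, hvb, huv, hsum⟩ := hmemDom p hpD
      have hden : s + p.1 + p.2 ≠ 0 := by
        intro h
        exact hsum (by linear_combination h - s * hF2)
      have hkey : g p * (s + p.1 + p.2) = x₁ * x₂ + s * (p.1 + p.2) + p.1 * p.2 := by
        rw [hgdef]
        exact div_mul_cancel₀ _ hden
      rw [hTdef, Finset.mem_coe, Finset.mem_filter]
      refine ⟨Finset.mem_univ _, huv, fun h => hgu h.symm, fun h => hgv h.symm,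
        hu0, hv0, hg0, hua, hub, hva, hvb, hga, hgb, ?_⟩
      show x₁ * x₂ + x₁ * p.1 + x₁ * p.2 + x₂ * p.1 + x₂ * p.2 + p.1 * p.2 +
        (x₁ + x₂ + p.1 + p.2) * g p = 0
      obtain ⟨w, hw⟩ : ∃ w : F, g p = w := ⟨_, rfl⟩
      rw [hw] at hkey ⊢
      linear_combination -hkey + (w * (x₁ + x₂ + p.1 + p.2)) * hF2
    · intro t ht
      show (t.1, t.2.1, g (t.1, t.2.1)) = t
      rw [hgw t ht]
    · intro p hp
      rfl
  have hcompl : ∀ S : Finset F, (Finset.univ \ S).card = q - S.card := by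
    intro S; rw [Finset.card_sdiff_of_subset (Finset.subset_univ S), Finset.card_univ, hF]
  have hadd0 : ∀ x y : F, x + y = 0 → x = y := by
    intro x y h; linear_combination h - y * hF2
  have hsx1 : s ≠ x₁ := by
    intro h; exact h2 (by linear_combination h - hsdef)
  have hsx2 : s ≠ x₂ := by
    intro h; exact h1 (by linear_combination h - hsdef)
  have hDom : Dom.card = (q - 4) * (q - 4) := by
    classical
    set U : Finset F := Finset.univ \ {0, x₁, x₂} with hUdef
    have hUmem : ∀ x : F, x ∈ U ↔ (x ≠ 0 ∧ x ≠ x₁ ∧ x ≠ x₂) := by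
      intro x; rw [hUdef]; simp [not_or]
    have hUcard : U.card = q - 3 := by
      rw [hUdef, hcompl]
      congr 1
      rw [Finset.card_insert_of_notMem (by simp [Ne.symm h1, Ne.symm h2]),
        Finset.card_insert_of_notMem (by simp [h12]), Finset.card_singleton]
    set D : Finset (F × F) := Finset.univ.filter (fun p =>
      p.1 ≠ 0 ∧ p.1 ≠ x₁ ∧ p.1 ≠ x₂ ∧ p.2 ≠ 0 ∧ p.2 ≠ x₁ ∧ p.2 ≠ x₂ ∧ p.1 ≠ p.2) with hDdef
    have hDcard : D.card = (q - 3) * (q - 4) := by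
      have hmap : ∀ p ∈ D, p.1 ∈ U := by
        intro p hp
        rw [hDdef, Finset.mem_filter] at hp
        rw [hUmem]
        exact ⟨hp.2.1, hp.2.2.1, hp.2.2.2.1⟩
      rw [Finset.card_eq_sum_card_fiberwise hmap]
      have hfib : ∀ u ∈ U, (D.filter (fun p => p.1 = u)).card = q - 4 := by
        intro u hu
        rw [hUmem] at hu
        have : (D.filter (fun p => p.1 = u)).card = (Finset.univ \ {0, x₁, x₂, u}).card := by
          apply Finset.card_nbij' (i := fun p => p.2) (j := fun x => (u, x))
          · intro p hp
            rw [Finset.mem_coe, Finset.mem_filter, hDdef, Finset.mem_filter] at hp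
            obtain ⟨⟨-, h⟩, hpu⟩ := hp
            simp only [Finset.mem_coe, Finset.mem_sdiff, Finset.mem_univ, true_and, Finset.mem_insert,
              Finset.mem_singleton, not_or]
            exact ⟨h.2.2.2.1, h.2.2.2.2.1, h.2.2.2.2.2.1, fun hx => h.2.2.2.2.2.2 (by rw [hpu, hx])⟩
          · intro x hx
            simp only [Finset.mem_coe, Finset.mem_sdiff, Finset.mem_univ, true_and, Finset.mem_insert,
              Finset.mem_singleton, not_or] at hx
            rw [Finset.mem_coe, Finset.mem_filter, hDdef, Finset.mem_filter]
            exact ⟨⟨Finset.mem_univ _, hu.1, hu.2.1, hu.2.2, hx.1, hx.2.1, hx.2.2.1,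
              fun h => hx.2.2.2 h.symm⟩, rfl⟩
          · intro p hp
            rw [Finset.mem_coe, Finset.mem_filter] at hp
            exact Prod.ext hp.2.symm rfl
          · intro x _
            rfl
        rw [this, hcompl]
        congr 1
        rw [Finset.card_insert_of_notMem (by simp [Ne.symm h1, Ne.symm h2, Ne.symm hu.1]),
          Finset.card_insert_of_notMem (by simp [h12, Ne.symm hu.2.1]),
          Finset.card_insert_of_notMem (by simp [Ne.symm hu.2.2]), Finset.card_singleton]
      rw [Finset.sum_congr rfl hfib, Finset.sum_const, hUcard, smul_eq_mul]
    set C : Finset (F × F) := (U \ {s}).image (fun u => (u, u + s)) with hCdef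
    have hsU : s ∈ U := by rw [hUmem]; exact ⟨hs, hsx1, hsx2⟩
    have hCcard : C.card = q - 4 := by
      rw [hCdef, Finset.card_image_of_injective _ (fun a b h => (congrArg Prod.fst h : a = b)),
        Finset.card_sdiff_of_subset (by simp [hsU]), hUcard, Finset.card_singleton]
      omega
    have hCD : C ⊆ D := by
      intro p hp
      rw [hCdef, Finset.mem_image] at hp
      obtain ⟨u, hu, rfl⟩ := hp
      rw [Finset.mem_sdiff, hUmem, Finset.mem_singleton] at hu
      obtain ⟨⟨hu0, hu1, hu2⟩, hus⟩ := hu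
      rw [hDdef, Finset.mem_filter]
      refine ⟨Finset.mem_univ _, hu0, hu1, hu2, ?_, ?_, ?_, ?_⟩
      · intro h; exact hus (hadd0 _ _ h)
      · intro h; exact hu2 (by linear_combination h - hsdef - x₂ * hF2)
      · intro h; exact hu1 (by linear_combination h - hsdef - x₁ * hF2)
      · intro h; exact hs (by linear_combination -h)
    have hDomDC : Dom = D \ C := by
      ext p
      rw [hDomdef, Finset.mem_filter, Finset.mem_sdiff, hDdef, Finset.mem_filter]
      constructor
      · rintro ⟨hmem, c1, c2, c3, c4, c5, c6, c7, c8⟩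
        refine ⟨⟨hmem, c1, c2, c3, c4, c5, c6, c7⟩, ?_⟩
        intro hC
        rw [hCdef, Finset.mem_image] at hC
        obtain ⟨u, -, hu⟩ := hC
        apply c8
        rw [← hu]
        show u + (u + s) = s
        linear_combination u * hF2
      · rintro ⟨⟨hmem, c1, c2, c3, c4, c5, c6, c7⟩, hnC⟩
        refine ⟨hmem, c1, c2, c3, c4, c5, c6, c7, ?_⟩
        intro hsum
        apply hnC
        rw [hCdef, Finset.mem_image]
        refine ⟨p.1, ?_, ?_⟩
        · rw [Finset.mem_sdiff, hUmem, Finset.mem_singleton]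
          refine ⟨⟨c1, c2, c3⟩, ?_⟩
          intro hps
          apply c4
          linear_combination hsum - hps
        · have hthis : p.2 = p.1 + s := by linear_combination hsum - p.1 * hF2
          exact Prod.ext rfl hthis.symm
    rw [hDomDC, Finset.card_sdiff_of_subset hCD, hDcard, hCcard]
    obtain ⟨r, hr⟩ : ∃ r, q = r + 16 := ⟨q - 16, by omega⟩
    have e1 : q - 3 = r + 13 := by omega
    have e2 : q - 4 = r + 12 := by omega
    rw [e1, e2]
    have : (r + 13) * (r + 12) = (r + 12) * (r + 12) + (r + 12) := by ring
    omega
  have hdenD : ∀ p : F × F, p ∈ Dom → s + p.1 + p.2 ≠ 0 := by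
    intro p hp h
    exact (hmemDom p hp).2.2.2.2.2.2.2 (by linear_combination h - (x₁ + x₂) * hF2)
  have hkeyD : ∀ p : F × F, p ∈ Dom →
      g p * (s + p.1 + p.2) = x₁ * x₂ + s * (p.1 + p.2) + p.1 * p.2 := by
    intro p hp; rw [hgdef]; exact div_mul_cancel₀ _ (hdenD p hp)
  have he'0 : e' ≠ 0 := by
    intro h; apply mul_ne_zero h1 h2; rw [← he', h]; ring
  have he'1 : e' ≠ x₁ := by
    intro h
    have hx : x₁ * (x₁ - x₂) = 0 := by linear_combination he' - (e' + x₁) * h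
    exact h12 (sub_eq_zero.mp ((mul_eq_zero.mp hx).resolve_left h1))
  have he'2 : e' ≠ x₂ := by
    intro h
    have hx : x₂ * (x₂ - x₁) = 0 := by linear_combination he' - (e' + x₂) * h
    exact h12 (sub_eq_zero.mp ((mul_eq_zero.mp hx).resolve_left h2)).symm
  have hB0 : B0.card = q - 8 := by
    have hss0' : s * s ≠ 0 := mul_ne_zero hs hs
    have hcss : c ≠ s * s := by
      intro h; exact mul_ne_zero h1 h2 (by linear_combination -h)
    have hcs1 : c ≠ s * x₁ := by
      intro h
      have hx : x₂ ^ 2 = 0 := by linear_combination h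
      exact h2 (pow_eq_zero_iff (by norm_num : (2:ℕ) ≠ 0) |>.mp hx)
    have hcs2'' : c ≠ s * x₂ := by
      intro h
      have hx : x₁ ^ 2 = 0 := by linear_combination h
      exact h1 (pow_eq_zero_iff (by norm_num : (2:ℕ) ≠ 0) |>.mp hx)
    have hc11 : c ≠ x₁ * x₁ := by
      intro h
      have hx : x₂ * s = 0 := by linear_combination h
      rcases mul_eq_zero.mp hx with h' | h'
      · exact h2 h'
      · exact hs h'
    have hc22 : c ≠ x₂ * x₂ := by
      intro h
      have hx : x₁ * s = 0 := by linear_combination h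
      rcases mul_eq_zero.mp hx with h' | h'
      · exact h1 h'
      · exact hs h'
    have hc12 : c ≠ x₁ * x₂ := by
      intro h
      exact hss0' (by linear_combination h + x₁ * x₂ * hF2)
    have he0 : e ≠ 0 := by intro h; apply hc; rw [← he, h]; ring
    have hes : e ≠ s := by intro h; apply hcss; rw [← he, h]; ring
    have he1 : e ≠ x₁ := by intro h; apply hc11; rw [← he, h]; ring
    have he2 : e ≠ x₂ := by intro h; apply hc22; rw [← he, h]; ring
    have hecs : e ≠ c / s := by
      intro h
      rw [eq_div_iff hs] at h
      exact hes (mul_left_cancel₀ he0 (by linear_combination he - h))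
    have hecx1 : e ≠ c / x₁ := by
      intro h
      rw [eq_div_iff h1] at h
      exact he1 (mul_left_cancel₀ he0 (by linear_combination he - h))
    have hecx2 : e ≠ c / x₂ := by
      intro h
      rw [eq_div_iff h2] at h
      exact he2 (mul_left_cancel₀ he0 (by linear_combination he - h))
    have hscs : s ≠ c / s := by
      intro h; rw [eq_div_iff hs] at h; exact hcss h.symm
    have hscx1 : s ≠ c / x₁ := by
      intro h; rw [eq_div_iff h1] at h; exact hcs1 (by linear_combination -h)
    have hscx2 : s ≠ c / x₂ := by
      intro h; rw [eq_div_iff h2] at h; exact hcs2'' (by linear_combination -h)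
    have hx1cs : x₁ ≠ c / s := by
      intro h; rw [eq_div_iff hs] at h; exact hcs1 (by linear_combination -h)
    have hx1cx1 : x₁ ≠ c / x₁ := by
      intro h; rw [eq_div_iff h1] at h; exact hc11 h.symm
    have hx1cx2 : x₁ ≠ c / x₂ := by
      intro h; rw [eq_div_iff h2] at h; exact hc12 h.symm
    have hx2cs : x₂ ≠ c / s := by
      intro h; rw [eq_div_iff hs] at h; exact hcs2'' (by linear_combination -h)
    have hx2cx1 : x₂ ≠ c / x₁ := by
      intro h; rw [eq_div_iff h1] at h; exact hc12 (by linear_combination -h)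
    have hx2cx2 : x₂ ≠ c / x₂ := by
      intro h; rw [eq_div_iff h2] at h; exact hc22 h.symm
    have hcscx1 : c / s ≠ c / x₁ := by
      intro h
      rw [div_eq_div_iff hs h1] at h
      exact hsx1 (mul_left_cancel₀ hc h).symm
    have hcscx2 : c / s ≠ c / x₂ := by
      intro h
      rw [div_eq_div_iff hs h2] at h
      exact hsx2 (mul_left_cancel₀ hc h).symm
    have hcx1cx2 : c / x₁ ≠ c / x₂ := by
      intro h
      rw [div_eq_div_iff h1 h2] at h
      exact h12 (mul_left_cancel₀ hc h).symm
    have hchar : ∀ p ∈ B0, (p.1 + s) * (p.2 + s) = c := by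
      intro p hp
      rw [hB0def, Finset.mem_filter] at hp
      have hkey := hkeyD p hp.1
      rw [hp.2] at hkey
      linear_combination -hkey
    have hcard2 : B0.card = (Finset.univ \ {0, s, x₁, x₂, c / s, c / x₁, c / x₂, e}).card := by
      apply Finset.card_nbij' (i := fun p => p.1 + s) (j := fun x => (x + s, c / x + s))
      · intro p hp
        have hch := hchar p hp
        rw [hB0def, Finset.mem_coe, Finset.mem_filter] at hp
        obtain ⟨hu0, hua, hub, hv0, hva, hvb, huv, hsum⟩ := hmemDom p hp.1
        have hune : p.1 + s ≠ 0 := by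
          intro hz; apply hc; rw [← hch, hz, zero_mul]
        simp only [Finset.mem_coe, Finset.mem_sdiff, Finset.mem_univ, true_and, Finset.mem_insert,
          Finset.mem_singleton, not_or]
        refine ⟨hune, ?_, ?_, ?_, ?_, ?_, ?_, ?_⟩
        · intro h; exact hu0 (by linear_combination h)
        · intro h; exact hub (by linear_combination h - x₂ * hF2)
        · intro h; exact hua (by linear_combination h - x₁ * hF2)
        · intro h
          rw [eq_div_iff hs] at h
          have hfac : (p.1 + s) * p.2 = 0 := by linear_combination hch - h
          exact hv0 ((mul_eq_zero.mp hfac).resolve_left hune)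
        · intro h
          rw [eq_div_iff h1] at h
          have hfac : (p.1 + s) * (p.2 + s - x₁) = 0 := by linear_combination hch - h
          have h3 := (mul_eq_zero.mp hfac).resolve_left hune
          exact hvb (by linear_combination h3 - x₂ * hF2)
        · intro h
          rw [eq_div_iff h2] at h
          have hfac : (p.1 + s) * (p.2 + s - x₂) = 0 := by linear_combination hch - h
          have h3 := (mul_eq_zero.mp hfac).resolve_left hune
          exact hva (by linear_combination h3 - x₁ * hF2)
        · intro h
          have hfac : (p.1 + s) * (p.2 - p.1) = 0 := by
            linear_combination hch - he - (p.1 + s + e) * h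
          have h3 := (mul_eq_zero.mp hfac).resolve_left hune
          exact huv (sub_eq_zero.mp h3).symm
      · intro x hx
        simp only [Finset.mem_coe, Finset.mem_sdiff, Finset.mem_univ, true_and, Finset.mem_insert,
          Finset.mem_singleton, not_or] at hx
        obtain ⟨hx0, hxs, hxa, hxb, hxcs, hxcx1, hxcx2, hxe⟩ := hx
        show (x + s, c / x + s) ∈ B0
        obtain ⟨y, hy⟩ : ∃ y : F, c / x = y := ⟨_, rfl⟩
        have hxy : x * y = c := by rw [← hy]; field_simp
        rw [hy]
        have c1 : x + s ≠ 0 := by intro h; exact hxs (hadd0 _ _ h)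
        have c2 : x + s ≠ x₁ := by
          intro h; exact hxb (by linear_combination h - x₂ * hF2)
        have c3 : x + s ≠ x₂ := by
          intro h; exact hxa (by linear_combination h - x₁ * hF2)
        have c4 : y + s ≠ 0 := by
          intro h
          apply hxcs
          rw [eq_div_iff hs]
          have hys : y = s := hadd0 _ _ h
          linear_combination hxy - x * hys
        have c5 : y + s ≠ x₁ := by
          intro h
          apply hxcx2
          rw [eq_div_iff h2]
          have hyx : y = x₂ := by linear_combination h - x₂ * hF2
          linear_combination hxy - x * hyx
        have c6 : y + s ≠ x₂ := by
          intro h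
          apply hxcx1
          rw [eq_div_iff h1]
          have hyx : y = x₁ := by linear_combination h - x₁ * hF2
          linear_combination hxy - x * hyx
        have c7 : x + s ≠ y + s := by
          intro h
          have hxy2 : x = y := by linear_combination h
          exact hxe (sq_inj F hF2 x e (by rw [he]; linear_combination hxy + x * hxy2))
        have c8 : (x + s) + (y + s) ≠ s := by
          intro h
          apply L2 x
          linear_combination x * h - hxy
        have hden : s + (x + s) + (y + s) ≠ 0 := by
          intro hd
          exact c8 (by linear_combination hd - (x₁ + x₂) * hF2)
        rw [hB0def, Finset.mem_filter, hDomdef, Finset.mem_filter]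
        refine ⟨⟨Finset.mem_univ _, c1, c2, c3, c4, c5, c6, c7, c8⟩, ?_⟩
        show g (x + s, y + s) = 0
        rw [hgdef]
        show (x₁ * x₂ + s * ((x + s) + (y + s)) + (x + s) * (y + s)) /
          (s + (x + s) + (y + s)) = 0
        rw [div_eq_iff hden]
        linear_combination hxy + ((x₁ + x₂) * x + (x₁ + x₂) * y + 2 * (x₁ + x₂) ^ 2) * hF2
      · intro p hp
        have hch := hchar p hp
        rw [hB0def, Finset.mem_coe, Finset.mem_filter] at hp
        have hune : p.1 + s ≠ 0 := by
          intro hz; apply hc; rw [← hch, hz, zero_mul]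
        show (p.1 + s + s, c / (p.1 + s) + s) = p
        have hc2 : c / (p.1 + s) = p.2 + s := by
          rw [div_eq_iff hune]; linear_combination -hch
        refine Prod.ext (by linear_combination (x₁ + x₂) * hF2) ?_
        rw [hc2]
        show p.2 + s + s = p.2
        linear_combination (x₁ + x₂) * hF2
      · intro x hx
        show x + s + s = x
        linear_combination (x₁ + x₂) * hF2
    rw [hcard2, hcompl]
    congr 1
    rw [Finset.card_insert_of_notMem
        (by simp [Ne.symm hs, Ne.symm h1, Ne.symm h2, Ne.symm (div_ne_zero hc hs),
          Ne.symm (div_ne_zero hc h1), Ne.symm (div_ne_zero hc h2), Ne.symm he0]),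
      Finset.card_insert_of_notMem
        (by simp [hsx1, hsx2, hscs, hscx1, hscx2, Ne.symm hes]),
      Finset.card_insert_of_notMem
        (by simp [h12, hx1cs, hx1cx1, hx1cx2, Ne.symm he1]),
      Finset.card_insert_of_notMem
        (by simp [hx2cs, hx2cx1, hx2cx2, Ne.symm he2]),
      Finset.card_insert_of_notMem
        (by simp [hcscx1, hcscx2, Ne.symm hecs]),
      Finset.card_insert_of_notMem
        (by simp [hcx1cx2, Ne.symm hecx1]),
      Finset.card_insert_of_notMem
        (by simp [Ne.symm hecx2]), Finset.card_singleton]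
  have hL1s : ∀ y : F, y ^ 2 + s * y + s * s ≠ 0 := by
    intro y h
    apply L1 (y / s)
    have expand : (y / s) ^ 2 + y / s + 1 = (y ^ 2 + s * y + s * s) / (s * s) := by
      field_simp
    rw [expand, h, zero_div]
  have hss0 : s * s ≠ 0 := mul_ne_zero hs hs
  have hBa : Ba.card = q - 4 := by
    have hchar : ∀ p ∈ Ba, (p.1 + x₂) * (p.2 + x₂) = s * s := by
      intro p hp
      rw [hBadef, Finset.mem_filter] at hp
      have hkey := hkeyD p hp.1
      rw [hp.2] at hkey
      linear_combination -hkey - x₁ * x₂ * hF2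
    have hd1 : s * s / x₂ ≠ x₂ := by
      intro h
      rw [div_eq_iff h2] at h
      exact hsx2 (sq_inj F hF2 s x₂ (by linear_combination h))
    have hd2 : s * s / x₂ ≠ s := by
      intro h
      rw [div_eq_iff h2] at h
      exact hsx2 (mul_left_cancel₀ hs (by linear_combination h))
    have hcard2 : Ba.card = (Finset.univ \ {0, x₂, s, s * s / x₂}).card := by
      apply Finset.card_nbij' (i := fun p => p.1 + x₂)
        (j := fun x => (x + x₂, s * s / x + x₂))
      · intro p hp
        have hch := hchar p hp
        rw [hBadef, Finset.mem_coe, Finset.mem_filter] at hp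
        obtain ⟨hu0, hua, hub, hv0, hva, hvb, huv, hsum⟩ := hmemDom p hp.1
        have hune : p.1 + x₂ ≠ 0 := by
          intro hz; exact hub (hadd0 _ _ hz)
        simp only [Finset.mem_coe, Finset.mem_sdiff, Finset.mem_univ, true_and, Finset.mem_insert,
          Finset.mem_singleton, not_or]
        refine ⟨hune, ?_, ?_, ?_⟩
        · intro h; exact hu0 (by linear_combination h)
        · intro h; exact hua (by linear_combination h)
        · intro h
          rw [eq_div_iff h2] at h
          apply hv0
          have hfac : (p.1 + x₂) * p.2 = 0 := by linear_combination hch - h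
          exact (mul_eq_zero.mp hfac).resolve_left hune
      · intro x hx
        simp only [Finset.mem_coe, Finset.mem_sdiff, Finset.mem_univ, true_and, Finset.mem_insert,
          Finset.mem_singleton, not_or] at hx
        obtain ⟨hx0, hxb, hxs, hxq⟩ := hx
        show (x + x₂, s * s / x + x₂) ∈ Ba
        obtain ⟨y, hy⟩ : ∃ y : F, s * s / x = y := ⟨_, rfl⟩
        have hxy : x * y = s * s := by rw [← hy]; field_simp
        rw [hy]
        have c1 : x + x₂ ≠ 0 := by intro h; exact hxb (hadd0 _ _ h)
        have c2 : x + x₂ ≠ x₁ := by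
          intro h; exact hxs (by linear_combination h - x₂ * hF2)
        have c3 : x + x₂ ≠ x₂ := by
          intro h; exact hx0 (by linear_combination h)
        have c4 : y + x₂ ≠ 0 := by
          intro h
          apply hxq
          rw [eq_div_iff h2]
          have hyx : y = x₂ := hadd0 _ _ h
          linear_combination hxy - x * hyx
        have c5 : y + x₂ ≠ x₁ := by
          intro h
          have hys : y = s := by linear_combination h - x₂ * hF2
          exact hxs (mul_right_cancel₀ hs (by linear_combination hxy - x * hys))
        have c6 : y + x₂ ≠ x₂ := by
          intro h
          have hy0 : y = 0 := by linear_combination h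
          apply hss0
          linear_combination -hxy + x * hy0
        have c7 : x + x₂ ≠ y + x₂ := by
          intro h
          have hxy2 : x = y := by linear_combination h
          exact hxs (sq_inj F hF2 x s (by linear_combination hxy + x * hxy2))
        have c8 : (x + x₂) + (y + x₂) ≠ s := by
          intro h
          apply hL1s x
          linear_combination x * h - hxy + (x * x₁) * hF2
        have hden : s + (x + x₂) + (y + x₂) ≠ 0 := by
          intro hd
          exact c8 (by linear_combination hd - (x₁ + x₂) * hF2)
        rw [hBadef, Finset.mem_filter, hDomdef, Finset.mem_filter]
        refine ⟨⟨Finset.mem_univ _, c1, c2, c3, c4, c5, c6, c7, c8⟩, ?_⟩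
        show g (x + x₂, y + x₂) = x₁
        rw [hgdef]
        show (x₁ * x₂ + s * ((x + x₂) + (y + x₂)) + (x + x₂) * (y + x₂)) /
          (s + (x + x₂) + (y + x₂)) = x₁
        rw [div_eq_iff hden]
        linear_combination hxy + (x₁ * x₂ + x₂ * x + x₂ * y + 2 * x₂ ^ 2) * hF2
      · intro p hp
        have hch := hchar p hp
        rw [hBadef, Finset.mem_coe, Finset.mem_filter] at hp
        have hub : p.1 ≠ x₂ := (hmemDom p hp.1).2.2.1
        have hune : p.1 + x₂ ≠ 0 := by intro hz; exact hub (hadd0 _ _ hz)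
        show (p.1 + x₂ + x₂, s * s / (p.1 + x₂) + x₂) = p
        have hc2 : s * s / (p.1 + x₂) = p.2 + x₂ := by
          rw [div_eq_iff hune]; linear_combination -hch
        refine Prod.ext (by linear_combination x₂ * hF2) ?_
        rw [hc2]
        show p.2 + x₂ + x₂ = p.2
        linear_combination x₂ * hF2
      · intro x hx
        show x + x₂ + x₂ = x
        linear_combination x₂ * hF2
    rw [hcard2, hcompl]
    congr 1
    rw [Finset.card_insert_of_notMem
        (by simp [Ne.symm h2, Ne.symm hs, Ne.symm (div_ne_zero hss0 h2)]),
      Finset.card_insert_of_notMem (by simp [Ne.symm hsx2, Ne.symm hd1]),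
      Finset.card_insert_of_notMem (by simp [Ne.symm hd2]), Finset.card_singleton]
  have hBb : Bb.card = q - 4 := by
    have hchar : ∀ p ∈ Bb, (p.1 + x₁) * (p.2 + x₁) = s * s := by
      intro p hp
      rw [hBbdef, Finset.mem_filter] at hp
      have hkey := hkeyD p hp.1
      rw [hp.2] at hkey
      linear_combination -hkey - x₁ * x₂ * hF2
    have hd1 : s * s / x₁ ≠ x₁ := by
      intro h
      rw [div_eq_iff h1] at h
      exact hsx1 (sq_inj F hF2 s x₁ (by linear_combination h))
    have hd2 : s * s / x₁ ≠ s := by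
      intro h
      rw [div_eq_iff h1] at h
      exact hsx1 (mul_left_cancel₀ hs (by linear_combination h))
    have hcard2 : Bb.card = (Finset.univ \ {0, x₁, s, s * s / x₁}).card := by
      apply Finset.card_nbij' (i := fun p => p.1 + x₁)
        (j := fun x => (x + x₁, s * s / x + x₁))
      · intro p hp
        have hch := hchar p hp
        rw [hBbdef, Finset.mem_coe, Finset.mem_filter] at hp
        obtain ⟨hu0, hua, hub, hv0, hva, hvb, huv, hsum⟩ := hmemDom p hp.1
        have hune : p.1 + x₁ ≠ 0 := by
          intro hz; exact hua (hadd0 _ _ hz)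
        simp only [Finset.mem_coe, Finset.mem_sdiff, Finset.mem_univ, true_and, Finset.mem_insert,
          Finset.mem_singleton, not_or]
        refine ⟨hune, ?_, ?_, ?_⟩
        · intro h; exact hu0 (by linear_combination h)
        · intro h; exact hub (by linear_combination h)
        · intro h
          rw [eq_div_iff h1] at h
          apply hv0
          have hfac : (p.1 + x₁) * p.2 = 0 := by linear_combination hch - h
          exact (mul_eq_zero.mp hfac).resolve_left hune
      · intro x hx
        simp only [Finset.mem_coe, Finset.mem_sdiff, Finset.mem_univ, true_and, Finset.mem_insert,
          Finset.mem_singleton, not_or] at hx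
        obtain ⟨hx0, hxa, hxs, hxq⟩ := hx
        show (x + x₁, s * s / x + x₁) ∈ Bb
        obtain ⟨y, hy⟩ : ∃ y : F, s * s / x = y := ⟨_, rfl⟩
        have hxy : x * y = s * s := by rw [← hy]; field_simp
        rw [hy]
        have c1 : x + x₁ ≠ 0 := by intro h; exact hxa (hadd0 _ _ h)
        have c2 : x + x₁ ≠ x₂ := by
          intro h; exact hxs (by linear_combination h - x₁ * hF2)
        have c3 : x + x₁ ≠ x₁ := by
          intro h; exact hx0 (by linear_combination h)
        have c4 : y + x₁ ≠ 0 := by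
          intro h
          apply hxq
          rw [eq_div_iff h1]
          have hyx : y = x₁ := hadd0 _ _ h
          linear_combination hxy - x * hyx
        have c5 : y + x₁ ≠ x₂ := by
          intro h
          have hys : y = s := by linear_combination h - x₁ * hF2
          exact hxs (mul_right_cancel₀ hs (by linear_combination hxy - x * hys))
        have c6 : y + x₁ ≠ x₁ := by
          intro h
          have hy0 : y = 0 := by linear_combination h
          apply hss0
          linear_combination -hxy + x * hy0
        have c7 : x + x₁ ≠ y + x₁ := by
          intro h
          have hxy2 : x = y := by linear_combination h
          exact hxs (sq_inj F hF2 x s (by linear_combination hxy + x * hxy2))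
        have c8 : (x + x₁) + (y + x₁) ≠ s := by
          intro h
          apply hL1s x
          linear_combination x * h - hxy + (x * x₂) * hF2
        have hden : s + (x + x₁) + (y + x₁) ≠ 0 := by
          intro hd
          exact c8 (by linear_combination hd - (x₁ + x₂) * hF2)
        rw [hBbdef, Finset.mem_filter, hDomdef, Finset.mem_filter]
        refine ⟨⟨Finset.mem_univ _, c1, c3, c2, c4, c6, c5, c7, c8⟩, ?_⟩
        show g (x + x₁, y + x₁) = x₂
        rw [hgdef]
        show (x₁ * x₂ + s * ((x + x₁) + (y + x₁)) + (x + x₁) * (y + x₁)) /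
          (s + (x + x₁) + (y + x₁)) = x₂
        rw [div_eq_iff hden]
        linear_combination hxy + (x₁ * x₂ + x₁ * x + x₁ * y + 2 * x₁ ^ 2) * hF2
      · intro p hp
        have hch := hchar p hp
        rw [hBbdef, Finset.mem_coe, Finset.mem_filter] at hp
        have hua : p.1 ≠ x₁ := (hmemDom p hp.1).2.1
        have hune : p.1 + x₁ ≠ 0 := by intro hz; exact hua (hadd0 _ _ hz)
        show (p.1 + x₁ + x₁, s * s / (p.1 + x₁) + x₁) = p
        have hc2 : s * s / (p.1 + x₁) = p.2 + x₁ := by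
          rw [div_eq_iff hune]; linear_combination -hch
        refine Prod.ext (by linear_combination x₁ * hF2) ?_
        rw [hc2]
        show p.2 + x₁ + x₁ = p.2
        linear_combination x₁ * hF2
      · intro x hx
        show x + x₁ + x₁ = x
        linear_combination x₁ * hF2
    rw [hcard2, hcompl]
    congr 1
    rw [Finset.card_insert_of_notMem
        (by simp [Ne.symm h1, Ne.symm hs, Ne.symm (div_ne_zero hss0 h1)]),
      Finset.card_insert_of_notMem (by simp [Ne.symm hsx1, Ne.symm hd1]),
      Finset.card_insert_of_notMem (by simp [Ne.symm hd2]), Finset.card_singleton]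
  have hBu : Bu.card = q - 4 := by
    have hchar : ∀ p ∈ Bu, s * p.2 = p.1 ^ 2 + x₁ * x₂ := by
      intro p hp
      rw [hBudef, Finset.mem_filter] at hp
      have hkey := hkeyD p hp.1
      rw [hp.2] at hkey
      linear_combination -hkey - x₁ * x₂ * hF2
    have hcard2 : Bu.card = (Finset.univ \ {0, x₁, x₂, e'}).card := by
      apply Finset.card_nbij' (i := fun p => p.1) (j := fun x => (x, (x ^ 2 + x₁ * x₂) / s))
      · intro p hp
        have hsv := hchar p hp
        rw [hBudef, Finset.mem_coe, Finset.mem_filter] at hp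
        obtain ⟨hu0, hua, hub, hv0, hva, hvb, huv, hsum⟩ := hmemDom p hp.1
        simp only [Finset.mem_coe, Finset.mem_sdiff, Finset.mem_univ, true_and, Finset.mem_insert,
          Finset.mem_singleton, not_or]
        refine ⟨hu0, hua, hub, ?_⟩
        intro hE
        apply hv0
        have h0 : s * p.2 = 0 := by
          linear_combination hsv + (p.1 + e') * hE + he' + x₁ * x₂ * hF2
        exact (mul_eq_zero.mp h0).resolve_left hs
      · intro x hx
        simp only [Finset.mem_coe, Finset.mem_sdiff, Finset.mem_univ, true_and, Finset.mem_insert,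
          Finset.mem_singleton, not_or] at hx
        obtain ⟨hx0, hxa, hxb, hxe⟩ := hx
        show (x, (x ^ 2 + x₁ * x₂) / s) ∈ Bu
        obtain ⟨v, hv⟩ : ∃ v : F, (x ^ 2 + x₁ * x₂) / s = v := ⟨_, rfl⟩
        have hsv : s * v = x ^ 2 + x₁ * x₂ := by rw [← hv]; field_simp
        rw [hv]
        have hvx1 : v ≠ x₁ := by
          intro h; exact hxa (sq_inj F hF2 x x₁ (by linear_combination -hsv + (x₁ + x₂) * h))
        have hvx2 : v ≠ x₂ := by
          intro h; exact hxb (sq_inj F hF2 x x₂ (by linear_combination -hsv + (x₁ + x₂) * h))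
        have hv0 : v ≠ 0 := by
          intro h
          exact hxe (sq_inj F hF2 x e'
            (by rw [he']; linear_combination -hsv + (x₁ + x₂) * h - x₁ * x₂ * hF2))
        have hxv : x ≠ v := by
          intro h
          have hfac : (x + x₁) * (x + x₂) = 0 := by
            linear_combination -hsv - (x₁ + x₂) * h + ((x₁ + x₂) * x) * hF2
          rcases mul_eq_zero.mp hfac with h' | h'
          · exact hxa (by linear_combination h' - x₁ * hF2)
          · exact hxb (by linear_combination h' - x₂ * hF2)
        have hxvs : x + v ≠ s := by
          intro h
          apply L2 x
          linear_combination -hsv - (x₁ + x₂) * h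
            + ((x₁ + x₂) * v + (x₁ + x₂) * x - x₁ * x₂) * hF2
        have hden : s + x + v ≠ 0 := by
          intro h
          exact hxvs (by linear_combination h - (x₁ + x₂) * hF2)
        rw [hBudef, Finset.mem_filter, hDomdef, Finset.mem_filter]
        refine ⟨⟨Finset.mem_univ _, hx0, hxa, hxb, hv0, hvx1, hvx2, hxv, hxvs⟩, ?_⟩
        show g (x, v) = x
        rw [hgdef]
        show (x₁ * x₂ + s * (x + v) + x * v) / (s + x + v) = x
        rw [div_eq_iff hden]
        linear_combination hsv + x₁ * x₂ * hF2
      · intro p hp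
        have hsv := hchar p hp
        have hthis : (p.1 ^ 2 + x₁ * x₂) / s = p.2 := by
          rw [div_eq_iff hs]; linear_combination -hsv
        exact Prod.ext rfl hthis
      · intro x hx
        rfl
    rw [hcard2, hcompl]
    congr 1
    rw [Finset.card_insert_of_notMem (by simp [Ne.symm h1, Ne.symm h2, Ne.symm he'0]),
      Finset.card_insert_of_notMem (by simp [h12, Ne.symm he'1]),
      Finset.card_insert_of_notMem (by simp [Ne.symm he'2]), Finset.card_singleton]
  have hBv : Bv.card = q - 4 := by
    have hchar : ∀ p ∈ Bv, s * p.1 = p.2 ^ 2 + x₁ * x₂ := by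
      intro p hp
      rw [hBvdef, Finset.mem_filter] at hp
      have hkey := hkeyD p hp.1
      rw [hp.2] at hkey
      linear_combination -hkey - x₁ * x₂ * hF2
    have hcard2 : Bv.card = (Finset.univ \ {0, x₁, x₂, e'}).card := by
      apply Finset.card_nbij' (i := fun p => p.2) (j := fun x => ((x ^ 2 + x₁ * x₂) / s, x))
      · intro p hp
        have hsv := hchar p hp
        rw [hBvdef, Finset.mem_coe, Finset.mem_filter] at hp
        obtain ⟨hu0, hua, hub, hv0, hva, hvb, huv, hsum⟩ := hmemDom p hp.1
        simp only [Finset.mem_coe, Finset.mem_sdiff, Finset.mem_univ, true_and, Finset.mem_insert,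
          Finset.mem_singleton, not_or]
        refine ⟨hv0, hva, hvb, ?_⟩
        intro hE
        apply hu0
        have h0 : s * p.1 = 0 := by
          linear_combination hsv + (p.2 + e') * hE + he' + x₁ * x₂ * hF2
        exact (mul_eq_zero.mp h0).resolve_left hs
      · intro x hx
        simp only [Finset.mem_coe, Finset.mem_sdiff, Finset.mem_univ, true_and, Finset.mem_insert,
          Finset.mem_singleton, not_or] at hx
        obtain ⟨hx0, hxa, hxb, hxe⟩ := hx
        show ((x ^ 2 + x₁ * x₂) / s, x) ∈ Bv
        obtain ⟨v, hv⟩ : ∃ v : F, (x ^ 2 + x₁ * x₂) / s = v := ⟨_, rfl⟩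
        have hsv : s * v = x ^ 2 + x₁ * x₂ := by rw [← hv]; field_simp
        rw [hv]
        have hvx1 : v ≠ x₁ := by
          intro h; exact hxa (sq_inj F hF2 x x₁ (by linear_combination -hsv + (x₁ + x₂) * h))
        have hvx2 : v ≠ x₂ := by
          intro h; exact hxb (sq_inj F hF2 x x₂ (by linear_combination -hsv + (x₁ + x₂) * h))
        have hv0 : v ≠ 0 := by
          intro h
          exact hxe (sq_inj F hF2 x e'
            (by rw [he']; linear_combination -hsv + (x₁ + x₂) * h - x₁ * x₂ * hF2))
        have hxv : v ≠ x := by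
          intro h
          have hfac : (x + x₁) * (x + x₂) = 0 := by
            linear_combination -hsv + (x₁ + x₂) * h + ((x₁ + x₂) * x) * hF2
          rcases mul_eq_zero.mp hfac with h' | h'
          · exact hxa (by linear_combination h' - x₁ * hF2)
          · exact hxb (by linear_combination h' - x₂ * hF2)
        have hxvs : v + x ≠ s := by
          intro h
          apply L2 x
          linear_combination -hsv - (x₁ + x₂) * h
            + ((x₁ + x₂) * v + (x₁ + x₂) * x - x₁ * x₂) * hF2
        have hden : s + v + x ≠ 0 := by
          intro h
          exact hxvs (by linear_combination h - (x₁ + x₂) * hF2)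
        rw [hBvdef, Finset.mem_filter, hDomdef, Finset.mem_filter]
        refine ⟨⟨Finset.mem_univ _, hv0, hvx1, hvx2, hx0, hxa, hxb, hxv, hxvs⟩, ?_⟩
        show g (v, x) = x
        rw [hgdef]
        show (x₁ * x₂ + s * (v + x) + v * x) / (s + v + x) = x
        rw [div_eq_iff hden]
        linear_combination hsv + x₁ * x₂ * hF2
      · intro p hp
        have hsv := hchar p hp
        have hthis : (p.2 ^ 2 + x₁ * x₂) / s = p.1 := by
          rw [div_eq_iff hs]; linear_combination -hsv
        exact Prod.ext hthis rfl
      · intro x hx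
        rfl
    rw [hcard2, hcompl]
    congr 1
    rw [Finset.card_insert_of_notMem (by simp [Ne.symm h1, Ne.symm h2, Ne.symm he'0]),
      Finset.card_insert_of_notMem (by simp [h12, Ne.symm he'1]),
      Finset.card_insert_of_notMem (by simp [Ne.symm he'2]), Finset.card_singleton]
  have hsplit : A.card + (B0.card + Ba.card + Bb.card + Bu.card + Bv.card) = Dom.card := by
    have hA2 : A = Dom.filter (fun p => ¬(g p = 0 ∨ g p = x₁ ∨ g p = x₂ ∨ g p = p.1 ∨ g p = p.2)) := by
      ext p
      simp only [hAdef, Finset.mem_filter, not_or]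
    have hcards := Finset.card_filter_add_card_filter_not (s := Dom)
      (p := fun p => g p = 0 ∨ g p = x₁ ∨ g p = x₂ ∨ g p = p.1 ∨ g p = p.2)
    rw [← hA2] at hcards
    have hun : Dom.filter (fun p => g p = 0 ∨ g p = x₁ ∨ g p = x₂ ∨ g p = p.1 ∨ g p = p.2)
        = B0 ∪ (Ba ∪ (Bb ∪ (Bu ∪ Bv))) := by
      rw [hB0def, hBadef, hBbdef, hBudef, hBvdef]
      simp only [Finset.filter_or]
    have duv : Disjoint Bu Bv := by
      rw [hBudef, hBvdef, Finset.disjoint_filter]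
      intro p hp h4 h5
      exact (hmemDom p hp).2.2.2.2.2.2.1 (h4.symm.trans h5)
    have dbuv : Disjoint Bb (Bu ∪ Bv) := by
      rw [Finset.disjoint_left]
      intro p hp hp'
      rw [hBbdef, Finset.mem_filter] at hp
      obtain ⟨hpD, hgb⟩ := hp
      have hD := hmemDom p hpD
      rcases Finset.mem_union.mp hp' with h | h
      · rw [hBudef, Finset.mem_filter] at h
        exact hD.2.2.1 (h.2.symm.trans hgb)
      · rw [hBvdef, Finset.mem_filter] at h
        exact hD.2.2.2.2.2.1 (h.2.symm.trans hgb)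
    have dabuv : Disjoint Ba (Bb ∪ (Bu ∪ Bv)) := by
      rw [Finset.disjoint_left]
      intro p hp hp'
      rw [hBadef, Finset.mem_filter] at hp
      obtain ⟨hpD, hga⟩ := hp
      have hD := hmemDom p hpD
      rcases Finset.mem_union.mp hp' with h | h
      · rw [hBbdef, Finset.mem_filter] at h
        exact h12 (hga.symm.trans h.2)
      · rcases Finset.mem_union.mp h with h | h
        · rw [hBudef, Finset.mem_filter] at h
          exact hD.2.1 (h.2.symm.trans hga)
        · rw [hBvdef, Finset.mem_filter] at h
          exact hD.2.2.2.2.1 (h.2.symm.trans hga)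
    have d0rest : Disjoint B0 (Ba ∪ (Bb ∪ (Bu ∪ Bv))) := by
      rw [Finset.disjoint_left]
      intro p hp hp'
      rw [hB0def, Finset.mem_filter] at hp
      obtain ⟨hpD, hg0⟩ := hp
      have hD := hmemDom p hpD
      rcases Finset.mem_union.mp hp' with h | h
      · rw [hBadef, Finset.mem_filter] at h
        exact h1 (h.2.symm.trans hg0)
      · rcases Finset.mem_union.mp h with h | h
        · rw [hBbdef, Finset.mem_filter] at h
          exact h2 (h.2.symm.trans hg0)
        · rcases Finset.mem_union.mp h with h | h
          · rw [hBudef, Finset.mem_filter] at h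
            exact hD.1 (h.2.symm.trans hg0)
          · rw [hBvdef, Finset.mem_filter] at h
            exact hD.2.2.2.1 (h.2.symm.trans hg0)
    rw [hun, Finset.card_union_of_disjoint d0rest, Finset.card_union_of_disjoint dabuv,
      Finset.card_union_of_disjoint dbuv, Finset.card_union_of_disjoint duv] at hcards
    omega
  have hT : T.card = (q - 5) * (q - 8) := by
    rw [hTA]
    obtain ⟨r, hr⟩ : ∃ r, q = r + 16 := ⟨q - 16, by omega⟩
    rw [hB0, hBa, hBb, hBu, hBv, hDom] at hsplit
    have e1 : q - 4 = r + 12 := by omega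
    have e2 : q - 5 = r + 11 := by omega
    have e3 : q - 8 = r + 8 := by omega
    rw [e1] at hsplit
    rw [e2, e3]
    have : (r + 11) * (r + 8) + ((r+8) + (r+12) + (r+12) + (r+12) + (r+12)) = (r+12)*(r+12) := by ring
    omega
  -- step 1 : unordered count
  set f : F × F × F → Finset F := fun t => {t.1, t.2.1, t.2.2} with hfdef
  have hset : {s : Finset F | ∃ x₃ x₄ x₅ : F, s = {x₃, x₄, x₅} ∧
      x₃ ≠ x₄ ∧ x₃ ≠ x₅ ∧ x₄ ≠ x₅ ∧
      x₃ ≠ 0 ∧ x₄ ≠ 0 ∧ x₅ ≠ 0 ∧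
      x₃ ≠ x₁ ∧ x₃ ≠ x₂ ∧ x₄ ≠ x₁ ∧ x₄ ≠ x₂ ∧ x₅ ≠ x₁ ∧ x₅ ≠ x₂ ∧
      x₁ * x₂ + x₁ * x₃ + x₁ * x₄ + x₂ * x₃ + x₂ * x₄ + x₃ * x₄ +
        (x₁ + x₂ + x₃ + x₄) * x₅ = 0} = ↑(T.image f) := by
    ext u
    simp only [Set.mem_setOf_eq, Finset.coe_image, Set.mem_image, Finset.mem_coe,
      Finset.mem_filter, Finset.mem_univ, true_and, hTdef, hfdef]
    constructor
    · rintro ⟨a, b, cc, rfl, h⟩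
      exact ⟨(a, b, cc), by tauto, rfl⟩
    · rintro ⟨⟨a, b, cc⟩, h, rfl⟩
      exact ⟨a, b, cc, rfl, by tauto⟩
  have hfiber : T.card = (T.image f).card * 6 := by
    have hsix : ∀ s0 ∈ T.image f, (T.filter fun t => f t = s0).card = 6 := by
      intro s0 hs0
      obtain ⟨t, ht, hft⟩ := Finset.mem_image.mp hs0
      obtain ⟨u, v, w⟩ := t
      obtain ⟨huv, huw, hvw, hu0, hv0, hw0, hua, hub, hva, hvb, hwa, hwb, heq⟩ := hmemT _ ht
      have hfilter_eq : (T.filter fun t' => f t' = s0)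
          = {(u,v,w), (u,w,v), (v,u,w), (v,w,u), (w,u,v), (w,v,u)} := by
        ext t'
        simp only [Finset.mem_filter]
        constructor
        · rintro ⟨ht', hf⟩
          obtain ⟨d12, d13, d23, -, -, -, -, -, -, -, -, -, -⟩ := hmemT t' ht'
          obtain ⟨a, b, cc⟩ := t'
          have hset2 : ({a, b, cc} : Finset F) = {u, v, w} := by
            rw [← hft] at hf
            exact hf
          have ha : a = u ∨ a = v ∨ a = w := by
            have : a ∈ ({u, v, w} : Finset F) := by rw [← hset2]; simp
            simpa using this
          have hb : b = u ∨ b = v ∨ b = w := by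
            have : b ∈ ({u, v, w} : Finset F) := by rw [← hset2]; simp
            simpa using this
          have hcc : cc = u ∨ cc = v ∨ cc = w := by
            have : cc ∈ ({u, v, w} : Finset F) := by rw [← hset2]; simp
            simpa using this
          simp only [Finset.mem_insert, Finset.mem_singleton, Prod.mk.injEq]
          exact perm3 a b cc u v w d12 d13 d23 ha hb hcc
        · intro hmem6
          simp only [Finset.mem_insert, Finset.mem_singleton] at hmem6
          have hperm : ∀ z₁ z₂ z₃ : F, ({u, v, w} : Finset F) = {z₁, z₂, z₃} →
              (z₁, z₂, z₃) ∈ T →  ((z₁, z₂, z₃) : F × F × F) ∈ T ∧ f (z₁, z₂, z₃) = s0 := by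
            intro z₁ z₂ z₃ hzz hzT
            exact ⟨hzT, by show ({z₁, z₂, z₃} : Finset F) = s0; rw [← hft, ← hzz]⟩
          have hTmem : ∀ z₁ z₂ z₃ : F, z₁ ≠ z₂ → z₁ ≠ z₃ → z₂ ≠ z₃ → z₁ ≠ 0 → z₂ ≠ 0 →
              z₃ ≠ 0 → z₁ ≠ x₁ → z₁ ≠ x₂ → z₂ ≠ x₁ → z₂ ≠ x₂ → z₃ ≠ x₁ → z₃ ≠ x₂ →
              x₁ * x₂ + x₁ * z₁ + x₁ * z₂ + x₂ * z₁ + x₂ * z₂ + z₁ * z₂ +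
                (x₁ + x₂ + z₁ + z₂) * z₃ = 0 → ((z₁, z₂, z₃) : F × F × F) ∈ T := by
            intro z₁ z₂ z₃ a1 a2 a3 a4 a5 a6 a7 a8 a9 a10 a11 a12 a13
            rw [hTdef, Finset.mem_filter]
            exact ⟨Finset.mem_univ _, a1, a2, a3, a4, a5, a6, a7, a8, a9, a10, a11, a12, a13⟩
          rcases hmem6 with rfl | rfl | rfl | rfl | rfl | rfl
          · exact hperm u v w rfl (hTmem u v w huv huw hvw hu0 hv0 hw0
              hua hub hva hvb hwa hwb (by linear_combination heq))
          · exact hperm u w v (tripleperm u v w).1 (hTmem u w v huw huv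
              (fun h => hvw h.symm) hu0 hw0 hv0 hua hub hwa hwb hva hvb
              (by linear_combination heq))
          · exact hperm v u w (tripleperm u v w).2.1 (hTmem v u w
              (fun h => huv h.symm) hvw huw hv0 hu0 hw0 hva hvb hua hub hwa hwb
              (by linear_combination heq))
          · exact hperm v w u (tripleperm u v w).2.2.1 (hTmem v w u hvw
              (fun h => huv h.symm) (fun h => huw h.symm) hv0 hw0 hu0 hva hvb hwa hwb
              hua hub (by linear_combination heq))
          · exact hperm w u v (tripleperm u v w).2.2.2.1 (hTmem w u v
              (fun h => huw h.symm) (fun h => hvw h.symm) huv hw0 hu0 hv0 hwa hwb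
              hua hub hva hvb (by linear_combination heq))
          · exact hperm w v u (tripleperm u v w).2.2.2.2 (hTmem w v u
              (fun h => hvw h.symm) (fun h => huw h.symm) (fun h => huv h.symm)
              hw0 hv0 hu0 hwa hwb hva hvb hua hub (by linear_combination heq))
      rw [hfilter_eq, card6 u v w huv huw hvw]
    rw [Finset.card_eq_sum_card_image f T, Finset.sum_congr rfl hsix, Finset.sum_const,
      smul_eq_mul]
  rw [hset, Set.ncard_coe_finset]
  rw [hT] at hfiber
  have h58 : (q-5) * (q-8) = (2^m - 5) * (2^m - 8) := by rw [hqdef]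
  omega
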